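/- Let X ∈ ℂ^{m×n} and Y ∈ ℂ^{m×p}. Let p ∈ ℝ^m be a probability distribution satisfying p(k) ≥ ‖X(k,·)‖²/(φ‖X‖_F²) for all k (a φ-oversampled importance sampling distribution for X). Let S ∈ ℝ^{1×m} be the random matrix equal to e_k/√(p(k)) with probability p(k). Then E[‖X† S† S Y − X† Y‖_F²] ≤ φ ‖X‖_F² ‖Y‖_F². -/

import Mathlib

open Matrix BigOperators

/-- Squared Frobenius norm of a matrix. -/
noncomputable def frobSq {m n α : Type*} [Fintype m] [Fintype n] [Norm α]
    (A : Matrix m n α) : ℝ :=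
  ∑ i, ∑ j, ‖A i j‖ ^ 2

lemma sum_comm3 {α β γ : Type*} [Fintype α] [Fintype β] [Fintype γ]
    {M : Type*} [AddCommMonoid M] (f : α → β → γ → M) :
    ∑ a, ∑ b, ∑ c, f a b c = ∑ c, ∑ a, ∑ b, f a b c := by
  have h : ∀ a : α, ∑ b, ∑ c, f a b c = ∑ c, ∑ b, f a b c := fun a => Finset.sum_comm
  simp_rw [h]
  exact Finset.sum_comm

/-- Scalar variance bound. -/
lemma key_scalar {m : ℕ} (w : Fin m → ℝ)
    (a : Fin m → ℂ) (b : ℂ) (hb : ∑ k, (w k : ℂ) * a k = b) (h1 : ∑ k, w k = 1) :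
    ∑ k, w k * ‖a k - b‖ ^ 2 ≤ ∑ k, w k * ‖a k‖ ^ 2 := by
  have expand : ∀ k : Fin m, ‖a k - b‖ ^ 2
      = ‖a k‖ ^ 2 + ‖b‖ ^ 2 - 2 * (a k * (starRingEnd ℂ) b).re := by
    intro k
    simp only [Complex.sq_norm]
    exact Complex.normSq_sub _ _
  have hre : ∑ k, w k * (a k * (starRingEnd ℂ) b).re = ‖b‖ ^ 2 := by
    have h2 : ∑ k, w k * (a k * (starRingEnd ℂ) b).re
        = ((∑ k, (w k : ℂ) * a k) * (starRingEnd ℂ) b).re := by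
      rw [Finset.sum_mul, Complex.re_sum]
      refine Finset.sum_congr rfl fun k _ => ?_
      rw [mul_assoc, Complex.re_ofReal_mul]
    rw [h2, hb, Complex.mul_conj]
    simp [Complex.sq_norm]
  calc ∑ k, w k * ‖a k - b‖ ^ 2
      = ∑ k, (w k * ‖a k‖ ^ 2 + w k * ‖b‖ ^ 2 - 2 * (w k * (a k * (starRingEnd ℂ) b).re)) := by
        refine Finset.sum_congr rfl fun k _ => ?_
        rw [expand k]; ring
    _ = ∑ k, w k * ‖a k‖ ^ 2 + (∑ k, w k) * ‖b‖ ^ 2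
          - 2 * ∑ k, w k * (a k * (starRingEnd ℂ) b).re := by
        rw [Finset.sum_sub_distrib, Finset.sum_add_distrib, Finset.mul_sum, Finset.sum_mul]
    _ = ∑ k, w k * ‖a k‖ ^ 2 - ‖b‖ ^ 2 := by rw [h1, hre]; ring
    _ ≤ ∑ k, w k * ‖a k‖ ^ 2 := by
        have : (0:ℝ) ≤ ‖b‖ ^ 2 := sq_nonneg _
        linarith

/-- Key variance bound for approximate matrix multiplication with a single importance sample:
if `p` is a `φ`-oversampled importance sampling distribution for the rows of `X`, and
`S k` is the `1 × m` sketch `e_k / √(p k)`, then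
`E[‖Xᴴ Sᴴ S Y − Xᴴ Y‖_F²] ≤ φ ‖X‖_F² ‖Y‖_F²`. -/
theorem stmt0 {m n p' : ℕ} (φ : ℝ) (hφ : 1 ≤ φ)
    (X : Matrix (Fin m) (Fin n) ℂ) (Y : Matrix (Fin m) (Fin p') ℂ)
    (p : Fin m → ℝ) (hp0 : ∀ k, 0 ≤ p k) (hp1 : ∑ k, p k = 1)
    (hover : ∀ k, (∑ j, ‖X k j‖ ^ 2) / (φ * frobSq X) ≤ p k)
    (S : Fin m → Matrix (Fin 1) (Fin m) ℂ)
    (hS : ∀ k i j, S k i j = if j = k then ((Real.sqrt (p k))⁻¹ : ℂ) else 0) :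
    ∑ k, p k * frobSq (Xᴴ * (S k)ᴴ * S k * Y - Xᴴ * Y)
      ≤ φ * frobSq X * frobSq Y := by
  have hsqrt : ∀ k : Fin m, ((Real.sqrt (p k) : ℂ))⁻¹ * ((Real.sqrt (p k) : ℂ))⁻¹
      = ((p k : ℂ))⁻¹ := by
    intro k
    rw [← mul_inv, ← Complex.ofReal_mul, Real.mul_self_sqrt (hp0 k)]
  have entry : ∀ (k : Fin m) (i : Fin n) (j : Fin p'),
      (Xᴴ * (S k)ᴴ * S k * Y) i j
        = ((p k : ℂ))⁻¹ * (starRingEnd ℂ) (X k i) * Y k j := by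
    intro k i j
    simp only [Matrix.mul_apply, Matrix.conjTranspose_apply, hS, Fin.sum_univ_one,
      apply_ite (star : ℂ → ℂ), star_zero, mul_ite, ite_mul, mul_zero, zero_mul,
      Finset.sum_ite_eq', Finset.mem_univ, if_true]
    rw [← hsqrt k]
    have hc : star (((Real.sqrt (p k) : ℂ))⁻¹) = ((Real.sqrt (p k) : ℂ))⁻¹ := by
      rw [star_inv₀]
      simp [Complex.star_def, Complex.conj_ofReal]
    rw [hc]
    have hs : star (X k i) = (starRingEnd ℂ) (X k i) := rfl
    rw [hs]
    ring
  by_cases hX0 : frobSq X = 0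
  · have hX : ∀ k i, X k i = 0 := by
      intro k i
      have h := Finset.sum_eq_zero_iff_of_nonneg
        (fun k _ => Finset.sum_nonneg fun j _ => sq_nonneg ‖X k j‖) |>.mp hX0
      have h2 := Finset.sum_eq_zero_iff_of_nonneg
        (fun j _ => sq_nonneg ‖X k j‖) |>.mp (h k (Finset.mem_univ k)) i (Finset.mem_univ i)
      simpa using h2
    have hXm : Xᴴ = 0 := by
      ext i j; simp [Matrix.conjTranspose_apply, hX]
    rw [hXm, hX0]
    simp [frobSq]
  have hXpos : 0 < frobSq X :=
    lt_of_le_of_ne (Finset.sum_nonneg fun i _ => Finset.sum_nonneg fun j _ => sq_nonneg _)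
      (Ne.symm hX0)
  have hφpos : 0 < φ := lt_of_lt_of_le one_pos hφ
  have hφX : 0 < φ * frobSq X := mul_pos hφpos hXpos
  have hrow : ∀ k, p k = 0 → ∀ i, X k i = 0 := by
    intro k hk i
    have h := hover k
    rw [hk] at h
    have hnum : ∑ j, ‖X k j‖ ^ 2 ≤ 0 := by
      by_contra hc
      push_neg at hc
      have := div_pos hc hφX
      linarith
    have hnum0 : ∑ j, ‖X k j‖ ^ 2 = 0 :=
      le_antisymm hnum (Finset.sum_nonneg fun j _ => sq_nonneg _)
    have h2 := Finset.sum_eq_zero_iff_of_nonneg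
      (fun j _ => sq_nonneg ‖X k j‖) |>.mp hnum0 i (Finset.mem_univ i)
    simpa using h2
  set B := Xᴴ * Y with hB
  have hBentry : ∀ (i : Fin n) (j : Fin p'),
      B i j = ∑ k, (starRingEnd ℂ) (X k i) * Y k j := by
    intro i j
    simp only [hB, Matrix.mul_apply, Matrix.conjTranspose_apply]
    rfl
  have step1 : ∑ k, p k * frobSq (Xᴴ * (S k)ᴴ * S k * Y - B)
      = ∑ i, ∑ j, ∑ k, p k * ‖((p k : ℂ))⁻¹ * (starRingEnd ℂ) (X k i) * Y k j - B i j‖ ^ 2 := by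
    have h := sum_comm3 (f := fun (i : Fin n) (j : Fin p') (k : Fin m) =>
      p k * ‖(Xᴴ * (S k)ᴴ * S k * Y - B) i j‖ ^ 2)
    simp only [frobSq, Finset.mul_sum]
    rw [← h]
    refine Finset.sum_congr rfl fun i _ => Finset.sum_congr rfl fun j _ =>
      Finset.sum_congr rfl fun k _ => ?_
    rw [Matrix.sub_apply, entry k i j]
  have step2 : ∀ (i : Fin n) (j : Fin p'),
      ∑ k, p k * ‖((p k : ℂ))⁻¹ * (starRingEnd ℂ) (X k i) * Y k j - B i j‖ ^ 2
        ≤ ∑ k, p k * ‖((p k : ℂ))⁻¹ * (starRingEnd ℂ) (X k i) * Y k j‖ ^ 2 := by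
    intro i j
    apply key_scalar p _ (B i j) _ hp1
    rw [hBentry i j]
    refine Finset.sum_congr rfl fun k _ => ?_
    by_cases hk : p k = 0
    · simp [hk, hrow k hk i]
    · rw [← mul_assoc, ← mul_assoc, mul_inv_cancel₀ (Complex.ofReal_ne_zero.mpr hk), one_mul]
  have step3 : ∑ i, ∑ j, ∑ k, p k * ‖((p k : ℂ))⁻¹ * (starRingEnd ℂ) (X k i) * Y k j‖ ^ 2
      = ∑ k, p k * ((p k)⁻¹) ^ 2 * (∑ i, ‖X k i‖ ^ 2) * (∑ j, ‖Y k j‖ ^ 2) := by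
    rw [sum_comm3 (f := fun (i : Fin n) (j : Fin p') (k : Fin m) =>
      p k * ‖((p k : ℂ))⁻¹ * (starRingEnd ℂ) (X k i) * Y k j‖ ^ 2)]
    refine Finset.sum_congr rfl fun k _ => ?_
    have hterm : ∀ (i : Fin n) (j : Fin p'),
        p k * ‖((p k : ℂ))⁻¹ * (starRingEnd ℂ) (X k i) * Y k j‖ ^ 2
          = (p k * ((p k)⁻¹) ^ 2) * (‖X k i‖ ^ 2 * ‖Y k j‖ ^ 2) := by
      intro i j
      rw [norm_mul, norm_mul, RCLike.norm_conj, ← Complex.ofReal_inv, Complex.norm_real,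
        Real.norm_eq_abs, abs_of_nonneg (inv_nonneg.mpr (hp0 k))]
      ring
    simp_rw [hterm]
    rw [mul_assoc, Finset.sum_mul_sum]
    simp_rw [Finset.mul_sum]
  have final : ∀ k : Fin m, p k * ((p k)⁻¹) ^ 2 * (∑ i, ‖X k i‖ ^ 2) * (∑ j, ‖Y k j‖ ^ 2)
      ≤ (φ * frobSq X) * (∑ j, ‖Y k j‖ ^ 2) := by
    intro k
    have hrY : (0:ℝ) ≤ ∑ j, ‖Y k j‖ ^ 2 := Finset.sum_nonneg fun j _ => sq_nonneg _
    by_cases hk : p k = 0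
    · rw [hk]
      simpa using mul_nonneg (le_of_lt hφX) hrY
    · have hkpos : 0 < p k := lt_of_le_of_ne (hp0 k) (Ne.symm hk)
      have h2 : (∑ i, ‖X k i‖ ^ 2) ≤ p k * (φ * frobSq X) := by
        have h := hover k
        rw [div_le_iff₀ hφX] at h
        linarith
      have hinv : (0:ℝ) ≤ (p k)⁻¹ := inv_nonneg.mpr (hp0 k)
      calc p k * ((p k)⁻¹) ^ 2 * (∑ i, ‖X k i‖ ^ 2) * (∑ j, ‖Y k j‖ ^ 2)
          = (p k)⁻¹ * (∑ i, ‖X k i‖ ^ 2) * (∑ j, ‖Y k j‖ ^ 2) := by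
            field_simp
        _ ≤ (p k)⁻¹ * (p k * (φ * frobSq X)) * (∑ j, ‖Y k j‖ ^ 2) := by
            gcongr
        _ = (φ * frobSq X) * (∑ j, ‖Y k j‖ ^ 2) := by
            field_simp
  calc ∑ k, p k * frobSq (Xᴴ * (S k)ᴴ * S k * Y - B)
      = ∑ i, ∑ j, ∑ k, p k * ‖((p k : ℂ))⁻¹ * (starRingEnd ℂ) (X k i) * Y k j - B i j‖ ^ 2 :=
        step1
    _ ≤ ∑ i, ∑ j, ∑ k, p k * ‖((p k : ℂ))⁻¹ * (starRingEnd ℂ) (X k i) * Y k j‖ ^ 2 :=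
        Finset.sum_le_sum fun i _ => Finset.sum_le_sum fun j _ => step2 i j
    _ = ∑ k, p k * ((p k)⁻¹) ^ 2 * (∑ i, ‖X k i‖ ^ 2) * (∑ j, ‖Y k j‖ ^ 2) := step3
    _ ≤ ∑ k, (φ * frobSq X) * (∑ j, ‖Y k j‖ ^ 2) := Finset.sum_le_sum fun k _ => final k
    _ = φ * frobSq X * frobSq Y := by
        rw [← Finset.mul_sum]
        rfl
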